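/- Let G be a Hausdorff, totally disconnected, locally compact topological group and α a topological group automorphism of G. If V is a compact open subgroup of G that is tidy for α and K is a compact α-stable subgroup of G, then V ∩ K is α-stable, i.e. α(V ∩ K) = V ∩ K. -/

import Mathlib

open Pointwise Filter Topology

variable {G : Type*}

/-- `V₊ = ⋂_{k ≥ 0} α^k(V)`. -/
def plusPart [Group G] (α : MulAut G) (V : Set G) : Set G :=
  ⋂ k : ℕ, ⇑(α ^ k) '' V

/-- `V₋ = ⋂_{k ≥ 0} α^{-k}(V)`. -/
def minusPart [Group G] (α : MulAut G) (V : Set G) : Set G :=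
  ⋂ k : ℕ, ⇑(α⁻¹ ^ k) '' V

/-- `V` is tidy above for `α` if `V = V₊V₋`. -/
def TidyAbove [Group G] (α : MulAut G) (V : Set G) : Prop :=
  V = plusPart α V * minusPart α V

/-- `V` is tidy below for `α` if `V₊₊` and `V₋₋` are closed. -/
def TidyBelow [Group G] [TopologicalSpace G] (α : MulAut G) (V : Set G) : Prop :=
  IsClosed (⋃ k : ℕ, ⇑(α ^ k) '' plusPart α V) ∧
  IsClosed (⋃ k : ℕ, ⇑(α⁻¹ ^ k) '' minusPart α V)

/-- `V` is tidy for `α` if it is tidy above and tidy below. -/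
def Tidy [Group G] [TopologicalSpace G] (α : MulAut G) (V : Set G) : Prop :=
  TidyAbove α V ∧ TidyBelow α V

/-- The nub of `α`: the intersection of all compact open subgroups tidy for `α`. -/
def nub [Group G] [TopologicalSpace G] (α : MulAut G) : Subgroup G :=
  ⨅ V ∈ {V : Subgroup G | IsCompact (V : Set G) ∧ IsOpen (V : Set G) ∧ Tidy α (V : Set G)}, V

/-- The contraction group `con(α) = { x | α^n(x) → 1 as n → ∞ }`. -/
def conSet [Group G] [TopologicalSpace G] (α : MulAut G) : Set G :=
  {x : G | Tendsto (fun n : ℕ => (α ^ n) x) atTop (𝓝 1)}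

/-- The homoclinic (two-sided contraction) group `bcg(α) = con(α) ∩ con(α⁻¹)`. -/
def bcgSet [Group G] [TopologicalSpace G] (α : MulAut G) : Set G :=
  conSet α ∩ conSet α⁻¹

/-- The bounded contraction group `bcon(α)`. -/
def bconSet [Group G] [TopologicalSpace G] (α : MulAut G) : Set G :=
  {x ∈ conSet α | IsCompact (closure (Set.range fun n : ℕ => (α⁻¹ ^ n) x))}

/-- Image of a subgroup under an automorphism. -/
def mapAut [Group G] (α : MulAut G) (V : Subgroup G) : Subgroup G where
  carrier := ⇑α '' (V : Set G)
  one_mem' := ⟨1, V.one_mem, map_one α⟩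
  mul_mem' := by
    rintro a b ⟨a', ha, rfl⟩ ⟨b', hb, rfl⟩
    exact ⟨a' * b', V.mul_mem ha hb, map_mul α a' b'⟩
  inv_mem' := by
    rintro a ⟨a', ha, rfl⟩
    exact ⟨a'⁻¹, V.inv_mem ha, map_inv α a'⟩

/-- `V₊` as a subgroup. -/
def plusSub [Group G] (α : MulAut G) (V : Subgroup G) : Subgroup G :=
  ⨅ k : ℕ, mapAut (α ^ k) V

/-- `V₋` as a subgroup. -/
def minusSub [Group G] (α : MulAut G) (V : Subgroup G) : Subgroup G :=
  ⨅ k : ℕ, mapAut (α⁻¹ ^ k) V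

/-- The shift automorphism of `F^ℤ`. -/
def shiftAut (F : Type*) [Group F] : MulAut (ℤ → F) where
  toFun f := fun n => f (n + 1)
  invFun f := fun n => f (n - 1)
  left_inv f := by funext n; show f (n - 1 + 1) = f n; congr 1; omega
  right_inv f := by funext n; show f (n + 1 - 1) = f n; congr 1; omega
  map_mul' f g := rfl

section helpers
variable [Group G]

lemma mem_image_mulAut (β : MulAut G) (s : Set G) (x : G) :
    x ∈ ⇑β '' s ↔ β⁻¹ x ∈ s := by
  constructor
  · rintro ⟨y, hy, rfl⟩; simpa using hy
  · intro h; exact ⟨β⁻¹ x, h, by simp⟩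

lemma mem_plusPart (α : MulAut G) (V : Set G) (x : G) :
    x ∈ plusPart α V ↔ ∀ k : ℕ, (α⁻¹ ^ k) x ∈ V := by
  simp only [plusPart, Set.mem_iInter, mem_image_mulAut, inv_pow]

lemma minusPart_eq (α : MulAut G) (V : Set G) : minusPart α V = plusPart α⁻¹ V := rfl

lemma mem_minusPart (α : MulAut G) (V : Set G) (x : G) :
    x ∈ minusPart α V ↔ ∀ k : ℕ, (α ^ k) x ∈ V := by
  rw [minusPart_eq, mem_plusPart]
  simp only [inv_inv]

lemma plusPart_subset (α : MulAut G) (V : Set G) : plusPart α V ⊆ V := by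
  intro x hx
  have := (mem_plusPart α V x).mp hx 0
  simpa using this

lemma plusPart_inv_mem (α : MulAut G) (V : Set G) {x : G} (hx : x ∈ plusPart α V)
    (m : ℕ) : (α⁻¹ ^ m) x ∈ plusPart α V := by
  rw [mem_plusPart] at hx ⊢
  intro k
  rw [← MulAut.mul_apply, ← pow_add]
  exact hx (k + m)

variable (V : Subgroup G)

lemma plusPart_one (α : MulAut G) : (1 : G) ∈ plusPart α (V : Set G) := by
  rw [mem_plusPart]; intro k; simp only [map_one]; exact V.one_mem

lemma plusPart_mul (α : MulAut G) {a b : G} (ha : a ∈ plusPart α (V : Set G))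
    (hb : b ∈ plusPart α (V : Set G)) : a * b ∈ plusPart α (V : Set G) := by
  rw [mem_plusPart] at ha hb ⊢
  intro k
  rw [map_mul]
  exact mul_mem (ha k) (hb k)

lemma plusPart_inv (α : MulAut G) {a : G} (ha : a ∈ plusPart α (V : Set G)) :
    a⁻¹ ∈ plusPart α (V : Set G) := by
  rw [mem_plusPart] at ha ⊢
  intro k
  rw [map_inv]
  exact inv_mem (ha k)

lemma image_comp_mulAut (β γ : MulAut G) (s : Set G) :
    ⇑β '' (⇑γ '' s) = ⇑(β * γ) '' s := by
  rw [← Set.image_comp]; rfl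

lemma plusPart_subset_apply (α : MulAut G) :
    plusPart α (V : Set G) ⊆ ⇑α '' plusPart α (V : Set G) := by
  intro x hx
  refine ⟨α⁻¹ x, ?_, by simp⟩
  have := plusPart_inv_mem α (V : Set G) hx 1
  simpa using this

lemma plusPart_image_mono (α : MulAut G) : ∀ {i j : ℕ}, i ≤ j →
    ⇑(α ^ i) '' plusPart α (V : Set G) ⊆ ⇑(α ^ j) '' plusPart α (V : Set G) := by
  intro i j hij
  induction j with
  | zero => simp_all
  | succ n ih =>
    rcases Nat.lt_or_ge i (n+1) with h | h
    · have h1 : ⇑(α ^ i) '' plusPart α (V : Set G) ⊆ ⇑(α ^ n) '' plusPart α (V : Set G) :=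
        ih (Nat.lt_succ_iff.mp h)
      refine h1.trans ?_
      have h2 := Set.image_mono (f := ⇑(α ^ n)) (plusPart_subset_apply V α)
      rw [image_comp_mulAut, ← pow_succ] at h2
      exact h2
    · have : i = n + 1 := le_antisymm hij h
      subst this
      exact le_refl _
end helpers

section topology
variable [Group G] [TopologicalSpace G] [IsTopologicalGroup G] [T2Space G]

lemma cont_mulAut_pow (β : MulAut G) (hβ : Continuous ⇑β) (k : ℕ) : Continuous ⇑(β ^ k) := by
  induction k with
  | zero => simpa [pow_zero] using continuous_id
  | succ n ih =>
    rw [pow_succ]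
    exact ih.comp hβ

lemma image_closure_mulAut (β : MulAut G) (hβ : Continuous ⇑β) (hβ' : Continuous ⇑β⁻¹)
    (s : Set G) : ⇑β '' closure s = closure (⇑β '' s) := by
  apply Set.Subset.antisymm (image_closure_subset_closure_image hβ)
  intro x hx
  have h1 : β⁻¹ x ∈ closure s := by
    have h2 : ⇑β⁻¹ '' closure (⇑β '' s) ⊆ closure (⇑β⁻¹ '' (⇑β '' s)) :=
      image_closure_subset_closure_image hβ'
    have h3 : ⇑β⁻¹ '' (⇑β '' s) = s := by
      rw [← Set.image_comp]
      simp [Function.comp_def]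
    have := h2 ⟨x, hx, rfl⟩
    rwa [h3] at this
  exact ⟨β⁻¹ x, h1, by simp⟩

lemma isOpen_image_mulAut (β : MulAut G) (hβ' : Continuous ⇑β⁻¹) {s : Set G}
    (hs : IsOpen s) : IsOpen (⇑β '' s) := by
  have h : ⇑β '' s = ⇑β⁻¹ ⁻¹' s := by
    ext x; rw [mem_image_mulAut]; rfl
  rw [h]
  exact hs.preimage hβ'

lemma step (α : MulAut G) (hαc : Continuous ⇑α) (hαc' : Continuous ⇑(α⁻¹))
    (V : Subgroup G) (hVc : IsCompact (V : Set G)) (hVo : IsOpen (V : Set G))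
    (hclosed : IsClosed (⋃ k : ℕ, ⇑(α ^ k) '' plusPart α (V : Set G)))
    (hsplit : ∀ x ∈ (V : Set G), ∃ u ∈ plusPart α (V : Set G),
      ∃ v ∈ minusPart α (V : Set G), x = u * v)
    (K : Subgroup G) (hKc : IsCompact (K : Set G))
    (hKf : ∀ g ∈ (K : Set G), α g ∈ (K : Set G)) :
    ∀ x ∈ (V : Set G) ∩ (K : Set G), α x ∈ (V : Set G) ∩ (K : Set G) := by
  have hVpsub : plusPart α (V : Set G) ⊆ (V : Set G) := plusPart_subset α _
  have hVpclosed : IsClosed (plusPart α (V : Set G)) :=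
    isClosed_iInter fun k => (hVc.image (cont_mulAut_pow α hαc k)).isClosed
  have hVpc : IsCompact (plusPart α (V : Set G)) :=
    hVc.of_isClosed_subset hVpclosed hVpsub
  set Vp := plusPart α (V : Set G) with hVpdef
  -- the group Vpp
  have himg_mul : ∀ (n : ℕ) {a b : G}, a ∈ ⇑(α ^ n) '' Vp → b ∈ ⇑(α ^ n) '' Vp →
      a * b ∈ ⇑(α ^ n) '' Vp := by
    rintro n a b ⟨a', ha, rfl⟩ ⟨b', hb, rfl⟩
    exact ⟨a' * b', plusPart_mul V α ha hb, map_mul _ _ _⟩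
  have himg_inv : ∀ (n : ℕ) {a : G}, a ∈ ⇑(α ^ n) '' Vp → a⁻¹ ∈ ⇑(α ^ n) '' Vp := by
    rintro n a ⟨a', ha, rfl⟩
    exact ⟨a'⁻¹, plusPart_inv V α ha, map_inv _ _⟩
  set Vpp := ⋃ k : ℕ, ⇑(α ^ k) '' Vp with hVppdef
  have hVppclosed : IsClosed Vpp := hclosed
  have hVpp_mul : ∀ {a b : G}, a ∈ Vpp → b ∈ Vpp → a * b ∈ Vpp := by
    intro a b ha hb
    obtain ⟨i, hi⟩ := Set.mem_iUnion.mp ha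
    obtain ⟨j, hj⟩ := Set.mem_iUnion.mp hb
    exact Set.mem_iUnion.mpr ⟨max i j,
      himg_mul _ (plusPart_image_mono V α (le_max_left i j) hi)
        (plusPart_image_mono V α (le_max_right i j) hj)⟩
  have hVpp_inv : ∀ {a : G}, a ∈ Vpp → a⁻¹ ∈ Vpp := by
    intro a ha
    obtain ⟨i, hi⟩ := Set.mem_iUnion.mp ha
    exact Set.mem_iUnion.mpr ⟨i, himg_inv _ hi⟩
  have hVpVpp : Vp ⊆ Vpp := by
    intro z hz
    have h0 : z ∈ ⇑(α ^ 0) '' Vp := ⟨z, hz, by simp⟩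
    exact Set.mem_iUnion.mpr ⟨0, h0⟩
  -- the compact group AA = V ∩ Vpp
  set AA := (V : Set G) ∩ Vpp with hAAdef
  have hAAc : IsCompact AA := hVc.inter_right hVppclosed
  have h1AA : (1 : G) ∈ AA := ⟨V.one_mem, hVpVpp (plusPart_one V α)⟩
  have hAA_mul : ∀ {a b : G}, a ∈ AA → b ∈ AA → a * b ∈ AA := by
    intro a b ha hb
    exact ⟨V.mul_mem ha.1 hb.1, hVpp_mul ha.2 hb.2⟩
  have hAA_inv : ∀ {a : G}, a ∈ AA → a⁻¹ ∈ AA := by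
    intro a ha
    exact ⟨V.inv_mem ha.1, hVpp_inv ha.2⟩
  -- Baire category on AA
  have hHnc : ∀ n : ℕ, IsCompact ((V : Set G) ∩ ⇑(α ^ n) '' Vp) :=
    fun n => hVc.inter_right (hVpc.image (cont_mulAut_pow α hαc n)).isClosed
  have hHn_mul : ∀ (n : ℕ) {a b : G}, a ∈ (V : Set G) ∩ ⇑(α ^ n) '' Vp →
      b ∈ (V : Set G) ∩ ⇑(α ^ n) '' Vp → a * b ∈ (V : Set G) ∩ ⇑(α ^ n) '' Vp := by
    intro n a b ha hb
    exact ⟨V.mul_mem ha.1 hb.1, himg_mul n ha.2 hb.2⟩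
  have hHn_inv : ∀ (n : ℕ) {a : G}, a ∈ (V : Set G) ∩ ⇑(α ^ n) '' Vp →
      a⁻¹ ∈ (V : Set G) ∩ ⇑(α ^ n) '' Vp := by
    intro n a ha
    exact ⟨V.inv_mem ha.1, himg_inv n ha.2⟩
  haveI : CompactSpace ↥AA := isCompact_iff_compactSpace.mp hAAc
  haveI : Nonempty ↥AA := ⟨⟨1, h1AA⟩⟩
  obtain ⟨n₁, hn₁⟩ := nonempty_interior_of_iUnion_of_closed
    (X := ↥AA) (f := fun n : ℕ => Subtype.val ⁻¹' ((V : Set G) ∩ ⇑(α ^ n) '' Vp))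
    (fun n => (hHnc n).isClosed.preimage continuous_subtype_val)
    (by
      ext y
      simp only [Set.mem_iUnion, Set.mem_univ, iff_true, Set.mem_preimage]
      obtain ⟨n, hn⟩ := Set.mem_iUnion.mp y.2.2
      exact ⟨n, y.2.1, hn⟩)
  obtain ⟨x₀, hx₀⟩ := hn₁
  obtain ⟨U₁, hU₁o, hU₁e⟩ := isOpen_induced_iff.mp
    (isOpen_interior (s := (Subtype.val ⁻¹' ((V : Set G) ∩ ⇑(α ^ n₁) '' Vp) : Set ↥AA)))
  have hx₀U₁ : (x₀ : G) ∈ U₁ := by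
    have h : x₀ ∈ Subtype.val ⁻¹' U₁ := by rw [hU₁e]; exact hx₀
    exact h
  have hx₀AA : (x₀ : G) ∈ AA := x₀.2
  have hx₀H : (x₀ : G) ∈ (V : Set G) ∩ ⇑(α ^ n₁) '' Vp := by
    have h := interior_subset hx₀
    exact h
  have hU₁H : ∀ y : G, y ∈ U₁ → y ∈ AA → y ∈ (V : Set G) ∩ ⇑(α ^ n₁) '' Vp := by
    intro y hyU hyAA
    have h : (⟨y, hyAA⟩ : ↥AA) ∈ Subtype.val ⁻¹' U₁ := hyU
    rw [hU₁e] at h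
    have h2 := interior_subset h
    exact h2
  set x := (x₀ : G) with hxdef
  set W := (fun g => x * g) ⁻¹' U₁ with hWdef
  have hWo : IsOpen W := hU₁o.preimage (continuous_mul_left x)
  have h1W : (1 : G) ∈ W := by
    simp only [hWdef, Set.mem_preimage, mul_one]
    exact hx₀U₁
  have hWH : ∀ w : G, w ∈ W → w ∈ AA → w ∈ (V : Set G) ∩ ⇑(α ^ n₁) '' Vp := by
    intro w hwW hwAA
    have hxw : x * w ∈ AA := hAA_mul hx₀AA hwAA
    have hH : x * w ∈ (V : Set G) ∩ ⇑(α ^ n₁) '' Vp := hU₁H _ hwW hxw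
    have h2 : x⁻¹ * (x * w) ∈ (V : Set G) ∩ ⇑(α ^ n₁) '' Vp :=
      hHn_mul n₁ (hHn_inv n₁ hx₀H) hH
    simpa using h2
  obtain ⟨t, ht⟩ := hAAc.elim_finite_subcover (fun a : ↥AA => (fun g => (a : G) * g) '' W)
    (fun a => (isOpenMap_mul_left (a : G)) W hWo)
    (by
      intro y hy
      exact Set.mem_iUnion.mpr ⟨⟨y, hy⟩, ⟨1, h1W, mul_one y⟩⟩)
  have hmem : ∀ a : ↥AA, ∃ n : ℕ, (a : G) ∈ ⇑(α ^ n) '' Vp := fun a => Set.mem_iUnion.mp a.2.2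
  choose mfun hmfun using hmem
  set k := max n₁ (t.sup mfun) with hkdef
  have hAAk : AA ⊆ ⇑(α ^ k) '' Vp := by
    intro y hy
    obtain ⟨a, hat, hya⟩ := Set.mem_iUnion₂.mp (ht hy)
    obtain ⟨w, hwW, hyw⟩ := hya
    have hwAA : w ∈ AA := by
      have h : (↑a)⁻¹ * y ∈ AA := hAA_mul (hAA_inv a.2) hy
      rwa [← hyw, inv_mul_cancel_left] at h
    have hwH := hWH w hwW hwAA
    have haH : (a : G) ∈ ⇑(α ^ k) '' Vp :=
      plusPart_image_mono V α (le_trans (Finset.le_sup hat) (le_max_right _ _)) (hmfun a)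
    have hwk : w ∈ ⇑(α ^ k) '' Vp := plusPart_image_mono V α (le_max_left _ _) hwH.2
    rw [← hyw]
    exact himg_mul k haH hwk
  -- the open set U with Vp = Vpp ∩ U
  set U := ⋂ j ∈ Finset.range (k+1), ⇑(α ^ j) '' (V : Set G) with hUdef
  have hUo : IsOpen U := isOpen_biInter_finset fun j _ =>
    isOpen_image_mulAut (α ^ j) (by rw [← inv_pow]; exact cont_mulAut_pow α⁻¹ hαc' j) hVo
  have hVpU : Vp ⊆ U := by
    intro z hz
    refine Set.mem_iInter₂.mpr fun j _ => ?_
    exact Set.mem_iInter.mp hz j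
  have hUV : U ⊆ (V : Set G) := by
    intro z hz
    have h := Set.mem_iInter₂.mp hz 0 (Finset.mem_range.mpr (Nat.succ_pos k))
    simpa using h
  have hKey : Vp = Vpp ∩ U := by
    apply Set.Subset.antisymm
    · exact Set.subset_inter hVpVpp hVpU
    · rintro z ⟨hzpp, hzU⟩
      have hzV : z ∈ (V : Set G) := hUV hzU
      have hzk : z ∈ ⇑(α ^ k) '' Vp := hAAk ⟨hzV, hzpp⟩
      have hzk' : (α⁻¹ ^ k) z ∈ Vp := by
        rw [inv_pow]
        exact (mem_image_mulAut (α ^ k) Vp z).mp hzk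
      rw [hVpdef, mem_plusPart]
      intro n
      rcases le_or_gt n k with h | h
      · have hzn : z ∈ ⇑(α ^ n) '' (V : Set G) :=
          Set.mem_iInter₂.mp hzU n (Finset.mem_range.mpr (Nat.lt_succ_of_le h))
        have h2 := (mem_image_mulAut (α ^ n) _ z).mp hzn
        rwa [← inv_pow] at h2
      · have heq : (α⁻¹ ^ n) z = (α⁻¹ ^ (n - k)) ((α⁻¹ ^ k) z) := by
          rw [← MulAut.mul_apply, ← pow_add]
          congr 2
          omega
        rw [heq]
        exact hVpsub (plusPart_inv_mem α _ hzk' (n - k))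
  have hVppstab : ∀ n : ℕ, ⇑(α ^ n) '' Vpp = Vpp := by
    intro n
    apply Set.Subset.antisymm
    · rw [hVppdef, Set.image_iUnion]
      refine Set.iUnion_subset fun j => ?_
      rw [image_comp_mulAut, ← pow_add]
      exact Set.subset_iUnion (fun m : ℕ => ⇑(α ^ m) '' Vp) (n + j)
    · intro z hz
      obtain ⟨j, hj⟩ := Set.mem_iUnion.mp hz
      have h : z ∈ ⇑(α ^ (n + j)) '' Vp := plusPart_image_mono V α (Nat.le_add_left j n) hj
      rw [pow_add, ← image_comp_mulAut] at h
      exact Set.image_mono (f := _) (Set.subset_iUnion (fun m : ℕ => ⇑(α ^ m) '' Vp) j) h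
  have himg_eq : ∀ n : ℕ, ⇑(α ^ n) '' Vp = Vpp ∩ ⇑(α ^ n) '' U := by
    intro n
    conv_lhs => rw [hKey]
    rw [Set.image_inter (α ^ n).injective, hVppstab n]
  -- now the main argument
  intro x1 hx1
  obtain ⟨u, hu, v, hv, hxuv⟩ := hsplit x1 hx1.1
  have hKpow : ∀ (n : ℕ) (g : G), g ∈ (K : Set G) → (α ^ n) g ∈ (K : Set G) := by
    intro n
    induction n with
    | zero => intro g hg; simpa using hg
    | succ m ih =>
      intro g hg
      rw [pow_succ, MulAut.mul_apply]
      exact ih _ (hKf g hg)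
  set T := Set.range (fun n : ℤ => (α ^ n) u) with hTdef
  have hTVpp : T ⊆ Vpp := by
    rintro _ ⟨n, rfl⟩
    rcases n with n | n
    · refine Set.mem_iUnion.mpr ⟨n, ⟨u, hu, ?_⟩⟩
      simp
    · simp only [zpow_negSucc, ← inv_pow]
      exact hVpVpp (plusPart_inv_mem α _ hu (n + 1))
  have hTC : T ⊆ (K : Set G) * (V : Set G) ∪ (V : Set G) := by
    rintro _ ⟨n, rfl⟩
    rcases n with n | n
    · left
      simp only [Int.ofNat_eq_coe, zpow_natCast]
      have hu' : u = x1 * v⁻¹ := by rw [hxuv, mul_inv_cancel_right]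
      rw [hu', map_mul, map_inv]
      exact Set.mul_mem_mul (hKpow n x1 hx1.2) (V.inv_mem ((mem_minusPart α _ v).mp hv n))
    · right
      simp only [zpow_negSucc, ← inv_pow]
      exact hVpsub (plusPart_inv_mem α _ hu (n + 1))
  have hCc : IsCompact ((K : Set G) * (V : Set G) ∪ (V : Set G)) := (hKc.mul hVc).union hVc
  set S := closure T with hSdef
  have hST : T ⊆ S := subset_closure
  have hSc : IsCompact S :=
    hCc.of_isClosed_subset isClosed_closure (closure_minimal hTC hCc.isClosed)
  have hSVpp : S ⊆ Vpp := closure_minimal hTVpp hVppclosed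
  have hshift : ∀ m : ℤ, α ((α ^ m) u) = (α ^ (m + 1)) u := by
    intro m
    rw [← MulAut.mul_apply]
    congr 1
    rw [← zpow_one_add, add_comm]
  have hTstab : ⇑α '' T = T := by
    ext y
    constructor
    · rintro ⟨_, ⟨n, rfl⟩, rfl⟩
      exact ⟨n + 1, (hshift n).symm⟩
    · rintro ⟨n, rfl⟩
      refine ⟨(α ^ (n - 1)) u, ⟨n - 1, rfl⟩, ?_⟩
      rw [hshift (n - 1)]
      congr 2
      omega
  have hSstab : ⇑α '' S = S := by
    rw [hSdef, image_closure_mulAut α hαc hαc', hTstab]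
  have hSinvstab : ⇑α⁻¹ '' S = S := by
    conv_lhs => rw [← hSstab]
    rw [image_comp_mulAut, inv_mul_cancel]
    simp
  have hSinv : ∀ N : ℕ, ⇑(α⁻¹ ^ N) '' S = S := by
    intro N
    induction N with
    | zero => simp
    | succ m ih => rw [pow_succ, ← image_comp_mulAut, hSinvstab, ih]
  have hUimgopen : ∀ n : ℕ, IsOpen (⇑(α ^ n) '' U) := fun n =>
    isOpen_image_mulAut _ (by rw [← inv_pow]; exact cont_mulAut_pow α⁻¹ hαc' n) hUo
  obtain ⟨t', ht'⟩ := hSc.elim_finite_subcover (fun n : ℕ => ⇑(α ^ n) '' U) hUimgopen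
    (by
      intro s hs
      obtain ⟨n, hn⟩ := Set.mem_iUnion.mp (hSVpp hs)
      exact Set.mem_iUnion.mpr ⟨n, Set.image_mono (f := _) hVpU hn⟩)
  set N := t'.sup id with hNdef
  have hSN : S ⊆ ⇑(α ^ N) '' Vp := by
    intro s hs
    obtain ⟨n, hnt, hn⟩ := Set.mem_iUnion₂.mp (ht' hs)
    have h : s ∈ ⇑(α ^ n) '' Vp := by
      rw [himg_eq n]
      exact ⟨hSVpp hs, hn⟩
    exact plusPart_image_mono V α (Finset.le_sup (f := id) hnt) h
  have hSVp : S ⊆ Vp := by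
    intro s hs
    have h1 : s ∈ ⇑(α⁻¹ ^ N) '' S := by rw [hSinv N]; exact hs
    obtain ⟨s', hs', rfl⟩ := h1
    obtain ⟨z, hz, rfl⟩ := hSN hs'
    have h2 : (α⁻¹ ^ N) ((α ^ N) z) = z := by
      rw [← MulAut.mul_apply, inv_pow, inv_mul_cancel]
      simp
    rw [h2]
    exact hz
  have hαu : α u ∈ Vp := hSVp (hST ⟨1, by simp⟩)
  have hαv : α v ∈ (V : Set G) := by
    have h := (mem_minusPart α _ v).mp hv 1
    simpa using h
  constructor
  · rw [hxuv, map_mul]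
    exact V.mul_mem (hVpsub hαu) hαv
  · exact hKf x1 hx1.2
end topology

/-- If `V` is a compact open subgroup tidy for `α` and `K` is a compact
`α`-stable subgroup, then `V ∩ K` is `α`-stable. -/
theorem tidy_inter_stable
    [Group G] [TopologicalSpace G] [IsTopologicalGroup G] [T2Space G]
    [TotallyDisconnectedSpace G] [LocallyCompactSpace G]
    (α : MulAut G) (hαc : Continuous ⇑α) (hαc' : Continuous ⇑(α⁻¹))
    (V : Subgroup G) (hVc : IsCompact (V : Set G)) (hVo : IsOpen (V : Set G))
    (hVt : Tidy α (V : Set G))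
    (K : Subgroup G) (hKc : IsCompact (K : Set G))
    (hKs : ⇑α '' (K : Set G) = (K : Set G)) :
    ⇑α '' ((V : Set G) ∩ (K : Set G)) = (V : Set G) ∩ (K : Set G) := by
  have hta : (V : Set G) = plusPart α (V : Set G) * minusPart α (V : Set G) := hVt.1
  have htb1 : IsClosed (⋃ k : ℕ, ⇑(α ^ k) '' plusPart α (V : Set G)) := hVt.2.1
  have htb2 : IsClosed (⋃ k : ℕ, ⇑(α⁻¹ ^ k) '' minusPart α (V : Set G)) := hVt.2.2
  have hKf : ∀ g ∈ (K : Set G), α g ∈ (K : Set G) := by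
    intro g hg
    rw [← hKs]
    exact ⟨g, hg, rfl⟩
  have hKf' : ∀ g ∈ (K : Set G), α⁻¹ g ∈ (K : Set G) := by
    intro g hg
    rw [← hKs] at hg
    obtain ⟨h, hh, rfl⟩ := hg
    simpa using hh
  have hsplit : ∀ x ∈ (V : Set G), ∃ u ∈ plusPart α (V : Set G),
      ∃ v ∈ minusPart α (V : Set G), x = u * v := by
    intro x hx
    rw [hta] at hx
    obtain ⟨u, hu, v, hv, huv⟩ := Set.mem_mul.mp hx
    exact ⟨u, hu, v, hv, huv.symm⟩
  have h1 := step α hαc hαc' V hVc hVo htb1 hsplit K hKc hKf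
  have e1 : minusPart α⁻¹ (V : Set G) = plusPart α (V : Set G) := by
    rw [minusPart_eq, inv_inv]
  have hαc'' : Continuous ⇑(α⁻¹⁻¹) := by rw [inv_inv]; exact hαc
  have hsplit' : ∀ x ∈ (V : Set G), ∃ u ∈ plusPart α⁻¹ (V : Set G),
      ∃ v ∈ minusPart α⁻¹ (V : Set G), x = u * v := by
    intro x hx
    obtain ⟨u, hu, v, hv, huv⟩ := hsplit x⁻¹ (V.inv_mem hx)
    refine ⟨v⁻¹, ?_, u⁻¹, ?_, ?_⟩
    · rw [← minusPart_eq]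
      exact plusPart_inv V α⁻¹ (by rw [minusPart_eq] at hv; exact hv)
    · rw [e1]
      exact plusPart_inv V α hu
    · rw [← mul_inv_rev, ← huv, inv_inv]
  have h2 := step α⁻¹ hαc' hαc'' V hVc hVo htb2 hsplit' K hKc hKf'
  ext z
  constructor
  · rintro ⟨y, hy, rfl⟩
    exact h1 y hy
  · intro hz
    refine ⟨α⁻¹ z, h2 z hz, by simp⟩
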